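/- (Quantitative version of Lemma 3, local visibility) In the spatial model, suppose the locations are distinct, and let m = min_{j≠i} dist(χ_i, χ_j) > 0. Then for every γ ≥ 0, the local visibility of node i satisfies 1 − p_i^{local}(γ) ≤ (∑_{j≠i} β_j / β_i) · exp(−γ·m). -/

import Mathlib

open Finset Real

/-- Quantitative version of Lemma 3 (local visibility): in the spatial model with distinct
node locations, with `m = min_{j ≠ i} dist (χ i) (χ j)` we have `m > 0` and, for every
decay parameter `γ ≥ 0`,
`1 - p_i^{local}(γ) ≤ (∑_{j ≠ i} β j / β i) · exp (-γ m)`. -/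
theorem spatial_local_visibility_quantitative
    {A : Type*} [MetricSpace A] {V : Type*} [Fintype V] [DecidableEq V]
    (hV : 2 ≤ Fintype.card V)
    (χ : V → A) (hχ : Function.Injective χ)
    (β : V → ℝ) (hβ : ∀ j, 0 < β j)
    (γ : ℝ) (hγ : 0 ≤ γ) (i : V)
    (hne : (univ.erase i).Nonempty) (m : ℝ)
    (hm : m = (univ.erase i).inf' hne (fun j => dist (χ i) (χ j))) :
    0 < m ∧
    1 - β i / (∑ j, Real.exp (-γ * dist (χ j) (χ i)) * β j)
      ≤ ((∑ j ∈ univ.erase i, β j) / β i) * Real.exp (-γ * m) := by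
  have hmpos : 0 < m := by
    rw [hm]
    apply (Finset.lt_inf'_iff hne).2
    intro j hj
    have hji : j ≠ i := Finset.ne_of_mem_erase hj
    exact dist_pos.2 fun h => hji (hχ h.symm)
  have hmle : ∀ j ∈ univ.erase i, m ≤ dist (χ j) (χ i) := by
    intro j hj
    rw [hm, dist_comm]
    exact Finset.inf'_le _ hj
  refine ⟨hmpos, ?_⟩
  set S := ∑ j, Real.exp (-γ * dist (χ j) (χ i)) * β j with hS
  have hterm : ∀ j, 0 < Real.exp (-γ * dist (χ j) (χ i)) * β j :=
    fun j => mul_pos (Real.exp_pos _) (hβ j)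
  have hSpos : 0 < S := Finset.sum_pos (fun j _ => hterm j) ⟨i, mem_univ i⟩
  have hsplit : S = Real.exp (-γ * dist (χ i) (χ i)) * β i + ∑ j ∈ univ.erase i, Real.exp (-γ * dist (χ j) (χ i)) * β j := by
    rw [hS, ← Finset.add_sum_erase _ _ (mem_univ i)]
  have hii : Real.exp (-γ * dist (χ i) (χ i)) * β i = β i := by
    simp
  have hβiS : β i ≤ S := by
    rw [hsplit, hii]
    nlinarith [Finset.sum_pos (fun j (hj : j ∈ univ.erase i) => hterm j) hne]
  have key : S - β i ≤ (∑ j ∈ univ.erase i, β j) * Real.exp (-γ * m) := by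
    rw [hsplit, hii]
    have : ∑ j ∈ univ.erase i, Real.exp (-γ * dist (χ j) (χ i)) * β j
        ≤ ∑ j ∈ univ.erase i, Real.exp (-γ * m) * β j := by
      apply Finset.sum_le_sum
      intro j hj
      apply mul_le_mul_of_nonneg_right _ (hβ j).le
      apply Real.exp_le_exp.2
      have := hmle j hj
      nlinarith
    have h2 : ∑ j ∈ univ.erase i, Real.exp (-γ * m) * β j = (∑ j ∈ univ.erase i, β j) * Real.exp (-γ * m) := by
      rw [Finset.sum_mul]; exact Finset.sum_congr rfl fun j _ => mul_comm _ _
    linarith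
  have h1 : 1 - β i / S = (S - β i) / S := by field_simp
  rw [h1]
  have h2 : (S - β i) / S ≤ (S - β i) / β i :=
    div_le_div_of_nonneg_left (by linarith) (hβ i) hβiS
  calc (S - β i) / S ≤ (S - β i) / β i := h2
    _ ≤ ((∑ j ∈ univ.erase i, β j) * Real.exp (-γ * m)) / β i :=
        by gcongr ?_ / ?_ <;> first | exact key | exact le_rfl | exact hβ i | exact (hβ i).le | exact mul_nonneg (Finset.sum_nonneg fun j _ => (hβ j).le) (Real.exp_pos _).le
    _ = ((∑ j ∈ univ.erase i, β j) / β i) * Real.exp (-γ * m) := by ring
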